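/- Let x^A be a degree-m monomial in x_0,...,x_n, written as x_{a_1}···x_{a_m} with a_1 ≤ ... ≤ a_m. Define the degree-n monomial y^B in y_0,...,y_m by b_0 = n - a_m, b_i = a_{m-i+1} - a_{m-i} for 1 ≤ i ≤ m-1, and b_m = a_1. Then for any two degree-m monomials x^{A_1}, x^{A_2} with images y^{B_1}, y^{B_2}: x^{A_1} <_Lex x^{A_2} if and only if y^{B_1} <_RevLex y^{B_2}. -/
import Mathlib


/-- `x^{A_1} <_Lex x^{A_2}`: at the first index where the exponent vectors differ,
`A_1` has the smaller exponent. -/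
def lexLT {k : ℕ} (A B : Fin k → ℕ) : Prop :=
  ∃ i : Fin k, A i < B i ∧ ∀ j : Fin k, j < i → A j = B j

/-- `x^{A} <_RevLex x^{B}` (same degree): at the last index where they differ,
`A` has the larger exponent (last nonzero entry of `A - B` is positive). -/
def revLexLT {k : ℕ} (A B : Fin k → ℕ) : Prop :=
  ∃ i : Fin k, B i < A i ∧ ∀ j : Fin k, i < j → A j = B j

/-- The exponent vector of `x_{a_1} ⋯ x_{a_m}` (zero-based sequence `a 0 ≤ … ≤ a (m-1)`). -/
def expOf (n m : ℕ) (a : ℕ → ℕ) : Fin (n + 1) → ℕ :=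
  fun x => ((Finset.range m).filter (fun i => a i = (x : ℕ))).card

/-- The flipped exponent vector: `b_0 = n - a_m`, `b_i = a_{m-i+1} - a_{m-i}`
for `1 ≤ i ≤ m-1`, `b_m = a_1` (in zero-based indexing of the sequence `a`). -/
def flipOf (n m : ℕ) (a : ℕ → ℕ) : Fin (m + 1) → ℕ :=
  fun i => if (i : ℕ) = 0 then n - a (m - 1)
    else if (i : ℕ) = m then a 0
    else a (m - (i : ℕ)) - a (m - (i : ℕ) - 1)

/-- Comparison of sorted sequences: at the first index where they differ,
`a₁` is larger. -/
def seqLT (m : ℕ) (a₁ a₂ : ℕ → ℕ) : Prop :=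
  ∃ t, t < m ∧ (∀ j < t, a₁ j = a₂ j) ∧ a₂ t < a₁ t

lemma lexLT_asymm {k : ℕ} {A B : Fin k → ℕ} (h : lexLT A B) : ¬ lexLT B A := by
  rintro ⟨i, hi, hji⟩
  obtain ⟨i', hi', hji'⟩ := h
  rcases lt_trichotomy i i' with h' | h' | h'
  · have := hji' i h'; omega
  · have : A i < B i := h' ▸ hi'; omega
  · have := hji i' h'; omega

lemma revLexLT_asymm {k : ℕ} {A B : Fin k → ℕ} (h : revLexLT A B) : ¬ revLexLT B A := by
  rintro ⟨i, hi, hji⟩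
  obtain ⟨i', hi', hji'⟩ := h
  rcases lt_trichotomy i i' with h' | h' | h'
  · have := hji i' h'; omega
  · have : B i < A i := h' ▸ hi'; omega
  · have := hji' i h'; omega

lemma seq_trich {m : ℕ} {a₁ a₂ : ℕ → ℕ} (hne : ∃ t, t < m ∧ a₁ t ≠ a₂ t) :
    seqLT m a₁ a₂ ∨ seqLT m a₂ a₁ := by
  classical
  obtain ⟨h1, h2⟩ := Nat.find_spec hne
  have hpre : ∀ j < Nat.find hne, a₁ j = a₂ j := by
    intro j hj
    by_contra hc
    exact Nat.find_min hne hj ⟨by omega, hc⟩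
  rcases lt_or_gt_of_ne h2 with h | h
  · right; exact ⟨Nat.find hne, h1, fun j hj => (hpre j hj).symm, h⟩
  · left; exact ⟨Nat.find hne, h1, hpre, h⟩

lemma exp_eq {n m : ℕ} {a₁ a₂ : ℕ → ℕ} (hpre : ∀ j < m, a₁ j = a₂ j) :
    expOf n m a₁ = expOf n m a₂ := by
  funext x
  unfold expOf
  congr 1
  ext i
  simp only [Finset.mem_filter, Finset.mem_range]
  constructor
  · rintro ⟨him, he⟩; exact ⟨him, by rw [← hpre i him]; exact he⟩
  · rintro ⟨him, he⟩; exact ⟨him, by rw [hpre i him]; exact he⟩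

lemma flip_eq {n m : ℕ} (hm : 0 < m) {a₁ a₂ : ℕ → ℕ} (hpre : ∀ j < m, a₁ j = a₂ j) :
    flipOf n m a₁ = flipOf n m a₂ := by
  funext i
  have hi : (i : ℕ) < m + 1 := i.isLt
  unfold flipOf
  split_ifs with h0 hmm
  · rw [hpre (m - 1) (by omega)]
  · rw [hpre 0 (by omega)]
  · rw [hpre (m - (i : ℕ)) (by omega), hpre (m - (i : ℕ) - 1) (by omega)]

lemma seq_to_lex {n m : ℕ} {a₁ a₂ : ℕ → ℕ} (h₁ : Monotone a₁) (h₂ : Monotone a₂)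
    (hb₂ : ∀ i < m, a₂ i ≤ n) (h : seqLT m a₁ a₂) :
    lexLT (expOf n m a₁) (expOf n m a₂) := by
  obtain ⟨t, ht, hpre, hlt⟩ := h
  refine ⟨⟨a₂ t, Nat.lt_succ_of_le (hb₂ t ht)⟩, ?_, ?_⟩
  · show ((Finset.range m).filter (fun i => a₁ i = a₂ t)).card <
        ((Finset.range m).filter (fun i => a₂ i = a₂ t)).card
    have ht2 : t ∈ (Finset.range m).filter (fun i => a₂ i = a₂ t) := by
      simp [Finset.mem_filter, Finset.mem_range, ht]
    have hsub : (Finset.range m).filter (fun i => a₁ i = a₂ t)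
        ⊆ ((Finset.range m).filter (fun i => a₂ i = a₂ t)).erase t := by
      intro i hi
      simp only [Finset.mem_filter, Finset.mem_range] at hi
      have hit : i < t := by
        by_contra hc
        have := h₁ (not_lt.1 hc : t ≤ i)
        omega
      simp only [Finset.mem_erase, Finset.mem_filter, Finset.mem_range]
      exact ⟨by omega, hi.1, by rw [← hpre i hit]; exact hi.2⟩
    calc ((Finset.range m).filter (fun i => a₁ i = a₂ t)).card
        ≤ (((Finset.range m).filter (fun i => a₂ i = a₂ t)).erase t).card :=
          Finset.card_le_card hsub
      _ < ((Finset.range m).filter (fun i => a₂ i = a₂ t)).card :=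
          Finset.card_erase_lt_of_mem ht2
  · intro j hj
    have hjv : (j : ℕ) < a₂ t := hj
    unfold expOf
    congr 1
    ext i
    simp only [Finset.mem_filter, Finset.mem_range]
    constructor
    · rintro ⟨him, he⟩
      refine ⟨him, ?_⟩
      rcases lt_or_ge i t with h' | h'
      · rw [← hpre i h']; exact he
      · exfalso; have := h₁ h'; omega
    · rintro ⟨him, he⟩
      refine ⟨him, ?_⟩
      rcases lt_or_ge i t with h' | h'
      · rw [hpre i h']; exact he
      · exfalso; have := h₂ h'; omega

lemma seq_to_revlex {n m : ℕ} {a₁ a₂ : ℕ → ℕ} (h₂ : Monotone a₂)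
    (h : seqLT m a₁ a₂) : revLexLT (flipOf n m a₁) (flipOf n m a₂) := by
  obtain ⟨t, ht, hpre, hlt⟩ := h
  refine ⟨⟨m - t, by omega⟩, ?_, ?_⟩
  · show flipOf n m a₂ ⟨m - t, by omega⟩ < flipOf n m a₁ ⟨m - t, by omega⟩
    unfold flipOf
    simp only
    rcases Nat.eq_zero_or_pos t with rfl | htpos
    · rw [if_neg (by omega), if_pos (by omega : m - 0 = m),
        if_neg (by omega), if_pos (by omega : m - 0 = m)]
      exact hlt
    · rw [if_neg (by omega), if_neg (by omega), if_neg (by omega), if_neg (by omega)]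
      have e1 : m - (m - t) = t := by omega
      rw [e1]
      have e2 : a₁ (t - 1) = a₂ (t - 1) := hpre (t - 1) (by omega)
      have e3 : a₂ (t - 1) ≤ a₂ t := h₂ (by omega)
      omega
  · intro j hj
    have hjv : m - t < (j : ℕ) := hj
    have hjm : (j : ℕ) ≤ m := Nat.lt_succ_iff.mp j.isLt
    clear hj
    have htpos : 0 < t := by omega
    unfold flipOf
    by_cases hje : (j : ℕ) = m
    · simp only [if_neg (show (j : ℕ) ≠ 0 by omega), if_pos hje]
      exact hpre 0 htpos
    · simp only [if_neg (show (j : ℕ) ≠ 0 by omega), if_neg hje]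
      rw [hpre (m - (j : ℕ)) (by omega), hpre (m - (j : ℕ) - 1) (by omega)]

/-- The flip `P(m,n) → P(n,m)` exchanges the lexicographic and reverse
lexicographic orders. -/
theorem stmt7 {n m : ℕ} (hm : 0 < m) (a₁ a₂ : ℕ → ℕ)
    (h₁ : Monotone a₁) (h₂ : Monotone a₂)
    (hb₁ : ∀ i < m, a₁ i ≤ n) (hb₂ : ∀ i < m, a₂ i ≤ n) :
    lexLT (expOf n m a₁) (expOf n m a₂) ↔ revLexLT (flipOf n m a₁) (flipOf n m a₂) := by
  constructor
  · intro h
    have hne : ∃ t, t < m ∧ a₁ t ≠ a₂ t := by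
      by_contra hc
      push_neg at hc
      have heq : expOf n m a₁ = expOf n m a₂ := exp_eq (fun j hj => hc j hj)
      obtain ⟨i, hi, -⟩ := h
      rw [heq] at hi; omega
    rcases seq_trich hne with hs | hs
    · exact seq_to_revlex h₂ hs
    · exact absurd h (lexLT_asymm (seq_to_lex h₂ h₁ hb₁ hs))
  · intro h
    have hne : ∃ t, t < m ∧ a₁ t ≠ a₂ t := by
      by_contra hc
      push_neg at hc
      have heq : flipOf n m a₁ = flipOf n m a₂ := flip_eq hm (fun j hj => hc j hj)
      obtain ⟨i, hi, -⟩ := h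
      rw [heq] at hi; omega
    rcases seq_trich hne with hs | hs
    · exact seq_to_lex h₁ h₂ hb₂ hs
    · exact absurd h (revLexLT_asymm (seq_to_revlex h₁ hs))
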